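/- Let A ⊂ B(X) be a strongly closed algebra with I ∈ A having complemented invariant subspace lattice, and let q ∈ A be a projection. Then algLat(qAq) = q(algLat A)q, i.e., an operator c on qX leaves every closed qAq-invariant subspace of qX invariant if and only if c = qbq for some b ∈ B(X) leaving every closed A-invariant subspace of X invariant. -/

import Mathlib

open Filter Topology

/-- For a strongly closed unital algebra `A` with complemented invariant
subspace lattice and a projection `q ∈ A`, one has `algLat(qAq) = q (algLat A) q`:
an operator `c` on `qX` (realized as `c ∈ B(X)` with `q c q = c`) leaves every closed
`qAq`-invariant subspace of `qX` invariant iff `c = q b q` for some `b ∈ algLat A`. -/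
theorem stmt2 {X : Type*} [NormedAddCommGroup X] [NormedSpace ℂ X] [CompleteSpace X]
    (A : Subalgebra ℂ (X →L[ℂ] X))
    (hA : IsClosed ((fun a : X →L[ℂ] X => (a : X → X)) '' (A : Set (X →L[ℂ] X))))
    (hCISL : ∀ K : Submodule ℂ X, IsClosed (K : Set X) → (∀ a ∈ A, ∀ x ∈ K, a x ∈ K) →
      ∃ Kc : Submodule ℂ X, IsClosed (Kc : Set X) ∧ (∀ a ∈ A, ∀ x ∈ Kc, a x ∈ Kc) ∧
        IsCompl K Kc)
    (q : X →L[ℂ] X) (hqA : q ∈ A) (hq : q * q = q)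
    (c : X →L[ℂ] X) (hc : q * c * q = c) :
    (∀ L : Submodule ℂ X, IsClosed (L : Set X) → L ≤ LinearMap.range (q : X →ₗ[ℂ] X) →
        (∀ a ∈ A, ∀ x ∈ L, q (a (q x)) ∈ L) → ∀ x ∈ L, c x ∈ L) ↔
      ∃ b : X →L[ℂ] X,
        (∀ K : Submodule ℂ X, IsClosed (K : Set X) → (∀ a ∈ A, ∀ x ∈ K, a x ∈ K) →
          ∀ x ∈ K, b x ∈ K) ∧ c = q * b * q := by
  have hfix : ∀ x, x ∈ LinearMap.range (q : X →ₗ[ℂ] X) ↔ q x = x := by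
    intro x
    constructor
    · rintro ⟨y, rfl⟩
      have := congrArg (fun f : X →L[ℂ] X => f y) hq
      simpa using this
    · intro h; exact ⟨x, h⟩
  constructor
  · -- forward: take b = c
    intro H
    refine ⟨c, ?_, hc.symm⟩
    intro K hKcl hKinv x hx
    set L : Submodule ℂ X := K ⊓ LinearMap.range (q : X →ₗ[ℂ] X) with hL
    have hLset : (L : Set X) = (K : Set X) ∩ {x | q x = x} := by
      ext y; simp [hL, Submodule.mem_inf, hfix, Set.mem_inter_iff]
    have hLcl : IsClosed (L : Set X) := by
      rw [hLset]
      exact hKcl.inter (isClosed_eq q.continuous continuous_id)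
    have hLinv : ∀ a ∈ A, ∀ y ∈ L, q (a (q y)) ∈ L := by
      intro a ha y hy
      have h1 : a (q y) ∈ K := hKinv a ha _ (hKinv q hqA y hy.1)
      exact ⟨hKinv q hqA _ h1, ⟨a (q y), rfl⟩⟩
    have hqx : q x ∈ L := ⟨hKinv q hqA x hx, ⟨x, rfl⟩⟩
    have hcqx : c (q x) ∈ L := H L hLcl inf_le_right hLinv _ hqx
    have : c x = q (c (q x)) := by
      conv_lhs => rw [← hc]
      rfl
    rw [this, (hfix _).1 hcqx.2]
    exact hcqx.1
  · -- backward
    rintro ⟨b, hb, rfl⟩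
    intro L hLcl hLle hLinv x hx
    have hqfix : ∀ y ∈ L, q y = y := fun y hy => (hfix y).1 (hLle hy)
    set S : Set X := {y | ∃ a ∈ A, ∃ z ∈ L, a z = y} with hS
    set M : Submodule ℂ X := Submodule.span ℂ S with hM
    set K : Submodule ℂ X := M.topologicalClosure with hK
    have hKcl : IsClosed (K : Set X) := M.isClosed_topologicalClosure
    have hMinv : ∀ a ∈ A, ∀ y ∈ M, a y ∈ M := by
      intro a ha y hy
      induction hy using Submodule.span_induction with
      | mem y hy =>
        obtain ⟨a', ha', z, hz, rfl⟩ := hy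
        exact Submodule.subset_span ⟨a * a', mul_mem ha ha', z, hz, rfl⟩
      | zero => simpa using (Submodule.zero_mem M)
      | add u v _ _ hu hv => rw [map_add]; exact M.add_mem hu hv
      | smul r u _ hu => rw [map_smul]; exact M.smul_mem r hu
    have hKinv : ∀ a ∈ A, ∀ y ∈ K, a y ∈ K := by
      intro a ha y hy
      exact map_mem_closure a.continuous hy (fun z hz => hMinv a ha z hz)
    have hLM : ∀ y ∈ L, y ∈ M :=
      fun y hy => Submodule.subset_span ⟨1, one_mem A, y, hy, by simp⟩
    have hqM : ∀ y ∈ M, q y ∈ L := by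
      intro y hy
      induction hy using Submodule.span_induction with
      | mem y hy =>
        obtain ⟨a, ha, z, hz, rfl⟩ := hy
        have := hLinv a ha z hz
        rwa [hqfix z hz] at this
      | zero => simpa using L.zero_mem
      | add u v _ _ hu hv => rw [map_add]; exact L.add_mem hu hv
      | smul r u _ hu => rw [map_smul]; exact L.smul_mem r hu
    have hbx : b x ∈ K := hb K hKcl hKinv x (subset_closure (hLM x hx))
    have hqbx : q (b x) ∈ L := by
      have : q (b x) ∈ closure (L : Set X) :=
        map_mem_closure q.continuous hbx (fun z hz => hqM z hz)
      rwa [hLcl.closure_eq] at this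
    have : (q * b * q) x = q (b (q x)) := rfl
    rw [this, hqfix x hx]
    exact hqbx
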